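/- Suppose x : [t₀, ∞) → ℝⁿ solves ẋᵢ = −(1 − xᵢ)xᵢ + ∑ⱼ cⱼᵢ(t)(1 − xⱼ)xⱼ where C(t) = [cᵢⱼ(t)] is doubly stochastic with zero diagonal for every t, and x(t₀) ∈ Δₙ. Then x(t) ∈ Δₙ for all t ≥ t₀; i.e., the simplex Δₙ is positively invariant for the dynamics. -/

import Mathlib

open Filter

lemma minsq_hasDerivAt (a : ℝ) :
    HasDerivAt (fun v : ℝ => min v 0 ^ 2) (2 * min a 0) a := by
  rcases lt_trichotomy a 0 with h | h | h
  · have hd : HasDerivAt (fun v : ℝ => v ^ 2) (2 * a) a := by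
      simpa using hasDerivAt_pow 2 a
    have hev : (fun v : ℝ => min v 0 ^ 2) =ᶠ[nhds a] fun v => v ^ 2 := by
      filter_upwards [Iio_mem_nhds h] with v hv
      rw [min_eq_left hv.le]
    rw [min_eq_left h.le]
    exact hd.congr_of_eventuallyEq hev
  · subst h
    have : (2 : ℝ) * min 0 0 = 0 := by norm_num
    rw [this, hasDerivAt_iff_tendsto_slope]
    have hb : ∀ v : ℝ, ‖slope (fun v : ℝ => min v 0 ^ 2) 0 v‖ ≤ |v| := by
      intro v
      rcases eq_or_ne v 0 with rfl | hv
      · simp [slope]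
      · have h1 : min v 0 ^ 2 ≤ v ^ 2 := by
          rcases le_or_gt v 0 with h' | h'
          · rw [min_eq_left h']
          · rw [min_eq_right h'.le]; simpa using sq_nonneg v
        have h2 : 0 ≤ min v 0 ^ 2 := sq_nonneg _
        have hv' : 0 < |v| := abs_pos.2 hv
        rw [slope_def_field]
        simp only [sub_zero]
        rw [Real.norm_eq_abs, abs_div]
        rw [div_le_iff₀ hv']
        calc |min v 0 ^ 2 - min 0 0 ^ 2| = min v 0 ^ 2 := by
              simp [abs_of_nonneg h2]
          _ ≤ v ^ 2 := h1
          _ = |v| * |v| := by rw [← abs_mul, abs_of_nonneg (mul_self_nonneg v), sq]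
    have ht : Tendsto (fun v : ℝ => |v|) (nhdsWithin 0 {(0:ℝ)}ᶜ) (nhds 0) := by
      have : Tendsto (fun v : ℝ => |v|) (nhds 0) (nhds 0) := by
        simpa using (continuous_abs.tendsto (0:ℝ))
      exact this.mono_left nhdsWithin_le_nhds
    exact squeeze_zero_norm hb ht
  · have hev : (fun v : ℝ => min v 0 ^ 2) =ᶠ[nhds a] fun _ => (0:ℝ) := by
      filter_upwards [Ioi_mem_nhds h] with v hv
      rw [min_eq_right hv.le]; norm_num
    rw [min_eq_right h.le]
    simpa using (hasDerivAt_const a (0:ℝ)).congr_of_eventuallyEq hev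

/-- Positive invariance of the simplex: if C(t) is doubly stochastic with zero
diagonal for every t ≥ t₀ and x solves the self-appraisal dynamics with
x(t₀) ∈ Δₙ, then x(t) ∈ Δₙ for all t ≥ t₀. -/
theorem simplex_positively_invariant (n : ℕ) (t₀ : ℝ)
    (C : ℝ → Matrix (Fin n) (Fin n) ℝ)
    (hC : ∀ t, t₀ ≤ t →
      (∀ i j, 0 ≤ C t i j) ∧ (∀ i, ∑ j, C t i j = 1) ∧
      (∀ j, ∑ i, C t i j = 1) ∧ (∀ i, C t i i = 0))
    (x : ℝ → Fin n → ℝ)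
    (hdyn : ∀ t, t₀ ≤ t → ∀ i, HasDerivAt (fun s => x s i)
      (-(1 - x t i) * x t i + ∑ j, C t j i * (1 - x t j) * x t j) t)
    (hx0 : (∀ i, 0 ≤ x t₀ i) ∧ ∑ i, x t₀ i = 1) :
    ∀ t, t₀ ≤ t → (∀ i, 0 ≤ x t i) ∧ ∑ i, x t i = 1 := by
  classical
  -- Step 1: the sum of coordinates has zero derivative, hence is constant 1.
  have hS : ∀ t, t₀ ≤ t → HasDerivAt (fun s => ∑ i, x s i) 0 t := by
    intro t ht
    have h := HasDerivAt.fun_sum (fun i (_ : i ∈ Finset.univ) => hdyn t ht i)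
    have hzero : ∑ i, (-(1 - x t i) * x t i + ∑ j, C t j i * (1 - x t j) * x t j)
        = 0 := by
      rw [Finset.sum_add_distrib, Finset.sum_comm]
      have hrow := (hC t ht).2.1
      have hj : ∀ j : Fin n, ∑ i : Fin n, C t j i * (1 - x t j) * x t j
          = (1 - x t j) * x t j := by
        intro j
        rw [← Finset.sum_mul, ← Finset.sum_mul, hrow j, one_mul]
      rw [Finset.sum_congr rfl fun j _ => hj j]
      have hneg : ∀ i : Fin n, -(1 - x t i) * x t i = -((1 - x t i) * x t i) :=
        fun i => by ring
      rw [Finset.sum_congr rfl fun i _ => hneg i, Finset.sum_neg_distrib,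
        neg_add_cancel]
    exact hzero ▸ h
  have hsum : ∀ t, t₀ ≤ t → ∑ i, x t i = 1 := by
    intro T hT
    have hconst := constant_of_has_deriv_right_zero
      (f := fun s => ∑ i, x s i) (a := t₀) (b := T)
      (fun s hs => ((hS s hs.1).continuousAt).continuousWithinAt)
      (fun s hs => (hS s hs.1).hasDerivWithinAt)
    have h := hconst T (Set.right_mem_Icc.2 hT)
    simpa using h.trans hx0.2
  intro T hT
  refine ⟨?_, hsum T hT⟩
  -- auxiliary functions
  set u : ℝ → ℝ := fun s => ∑ i, -(min (x s i) 0) with hu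
  set ψ : ℝ → ℝ := fun s => ∑ i, min (x s i) 0 ^ 2 with hψ
  have hu0 : ∀ s, 0 ≤ u s := fun s =>
    Finset.sum_nonneg fun i _ => neg_nonneg.2 (min_le_right _ _)
  have hψ0 : ∀ s, 0 ≤ ψ s := fun s => Finset.sum_nonneg fun i _ => sq_nonneg _
  -- bound on u over the compact interval
  have hucont : ContinuousOn u (Set.Icc t₀ T) := by
    apply continuousOn_finset_sum
    intro i _
    have hc : ContinuousOn (fun s => x s i) (Set.Icc t₀ T) :=
      fun s hs => ((hdyn s hs.1 i).continuousAt).continuousWithinAt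
    have h2 : Continuous (fun v : ℝ => min v 0) := continuous_id.min continuous_const
    exact (h2.comp_continuousOn hc).neg
  obtain ⟨M, hM⟩ : ∃ M, ∀ s ∈ Set.Icc t₀ T, u s ≤ M := by
    obtain ⟨s0, _, hs0⟩ :=
      isCompact_Icc.exists_isMaxOn (Set.nonempty_Icc.2 hT) hucont
    exact ⟨u s0, fun s hs => hs0 hs⟩
  set K : ℝ := 2 * (1 + M) * n with hK
  -- derivative of ψ
  have hψder : ∀ s, t₀ ≤ s → HasDerivAt ψ
      (∑ i, 2 * min (x s i) 0 *
        (-(1 - x s i) * x s i + ∑ j, C s j i * (1 - x s j) * x s j)) s := by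
    intro s hs
    apply HasDerivAt.fun_sum
    intro i _
    have h := (minsq_hasDerivAt (x s i)).comp s (hdyn s hs i)
    simpa [Function.comp_def] using h
  -- the key differential inequality ψ' ≤ K ψ
  have hkey : ∀ s ∈ Set.Icc t₀ T,
      (∑ i, 2 * min (x s i) 0 *
        (-(1 - x s i) * x s i + ∑ j, C s j i * (1 - x s j) * x s j))
        ≤ K * ψ s := by
    intro s hs
    obtain ⟨hs1, hs2⟩ := hs
    have hMs := hM s ⟨hs1, hs2⟩
    have hu0s := hu0 s
    have hxlb : ∀ j, -(u s) ≤ x s j := by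
      intro j
      have h1 : -(min (x s j) 0) ≤ u s :=
        Finset.single_le_sum (f := fun k => -(min (x s k) 0))
          (fun k _ => neg_nonneg.2 (min_le_right _ _)) (Finset.mem_univ j)
      linarith [min_le_left (x s j) 0]
    have hxub : ∀ j, x s j ≤ 1 + u s := by
      intro j
      have hsum1 := hsum s hs1
      have h1 : ∑ k ∈ Finset.univ.erase j, min (x s k) 0
          ≤ ∑ k ∈ Finset.univ.erase j, x s k :=
        Finset.sum_le_sum fun k _ => min_le_left _ _
      have h2 : min (x s j) 0 + ∑ k ∈ Finset.univ.erase j, min (x s k) 0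
          = -(u s) := by
        have := Finset.add_sum_erase Finset.univ (fun k => min (x s k) 0)
          (Finset.mem_univ j)
        rw [this]
        simp [hu, Finset.sum_neg_distrib]
      have h3 : x s j + ∑ k ∈ Finset.univ.erase j, x s k = 1 := by
        have := Finset.add_sum_erase Finset.univ (fun k => x s k)
          (Finset.mem_univ j)
        rw [this]; exact hsum1
      have h4 : min (x s j) 0 ≤ 0 := min_le_right _ _
      linarith
    have hglb : ∀ j, -((1 + u s) * u s) ≤ (1 - x s j) * x s j := by
      intro j
      nlinarith [mul_nonneg (by linarith [hxlb j] : (0:ℝ) ≤ x s j + u s)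
        (by linarith [hxub j] : (0:ℝ) ≤ 1 + u s - x s j)]
    have hinflux : ∀ i : Fin n,
        -((1 + u s) * u s) ≤ ∑ j, C s j i * (1 - x s j) * x s j := by
      intro i
      have hcol : ∑ j, C s j i = 1 := (hC s hs1).2.2.1 i
      have hCpos := (hC s hs1).1
      calc -((1 + u s) * u s) = ∑ j, C s j i * -((1 + u s) * u s) := by
            rw [← Finset.sum_mul, hcol, one_mul]
        _ ≤ ∑ j, C s j i * (1 - x s j) * x s j := by
            apply Finset.sum_le_sum
            intro j _
            rw [mul_assoc]
            exact mul_le_mul_of_nonneg_left (hglb j) (hCpos j i)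
    have hterm : ∀ i : Fin n, 2 * min (x s i) 0 *
        (-(1 - x s i) * x s i + ∑ j, C s j i * (1 - x s j) * x s j)
        ≤ -(min (x s i) 0) * (2 * ((1 + u s) * u s)) := by
      intro i
      rcases le_or_gt 0 (x s i) with h | h
      · rw [min_eq_right h]
        simp
      · rw [min_eq_left h.le]
        have hI := hinflux i
        nlinarith [mul_nonneg (neg_nonneg.2 h.le) (sq_nonneg (x s i)),
          mul_nonneg (neg_nonneg.2 h.le)
            (by linarith : (0:ℝ) ≤ (∑ j, C s j i * (1 - x s j) * x s j)
              + (1 + u s) * u s),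
          sq_nonneg (x s i)]
    have hCS : (u s) ^ 2 ≤ (n : ℝ) * ψ s := by
      have h := Finset.sum_mul_sq_le_sq_mul_sq (Finset.univ : Finset (Fin n))
        (fun _ => (1 : ℝ)) (fun i => -(min (x s i) 0))
      simpa [hu, hψ, neg_sq] using h
    calc (∑ i, 2 * min (x s i) 0 *
          (-(1 - x s i) * x s i + ∑ j, C s j i * (1 - x s j) * x s j))
        ≤ ∑ i, -(min (x s i) 0) * (2 * ((1 + u s) * u s)) :=
          Finset.sum_le_sum fun i _ => hterm i
      _ = u s * (2 * ((1 + u s) * u s)) := by rw [← Finset.sum_mul]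
      _ ≤ K * ψ s := by
          have hψ0s := hψ0 s
          nlinarith [mul_nonneg (by linarith : (0:ℝ) ≤ 1 + M)
              (by linarith : (0:ℝ) ≤ (n : ℝ) * ψ s - (u s) ^ 2),
            mul_nonneg (by linarith : (0:ℝ) ≤ M - u s) (sq_nonneg (u s))]
  -- Gronwall via an exponentially weighted function
  set φ : ℝ → ℝ := fun s => ψ s * Real.exp (-K * (s - t₀)) with hφ
  have hφder : ∀ s, t₀ ≤ s → HasDerivAt φ
      ((∑ i, 2 * min (x s i) 0 *
        (-(1 - x s i) * x s i + ∑ j, C s j i * (1 - x s j) * x s j))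
          * Real.exp (-K * (s - t₀))
        + ψ s * (-K * Real.exp (-K * (s - t₀)))) s := by
    intro s hs
    have h2 : HasDerivAt (fun r : ℝ => Real.exp (-K * (r - t₀)))
        (-K * Real.exp (-K * (s - t₀))) s := by
      have hlin : HasDerivAt (fun r : ℝ => -K * (r - t₀)) (-K) s := by
        simpa using ((hasDerivAt_id s).sub_const t₀).const_mul (-K)
      simpa [mul_comm] using hlin.exp
    exact (hψder s hs).mul h2
  have hanti : AntitoneOn φ (Set.Icc t₀ T) := by
    apply antitoneOn_of_deriv_nonpos (convex_Icc t₀ T)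
    · intro s hs
      exact ((hφder s hs.1).continuousAt).continuousWithinAt
    · intro s hs
      rw [interior_Icc] at hs
      exact (hφder s hs.1.le).differentiableAt.differentiableWithinAt
    · intro s hs
      rw [interior_Icc] at hs
      rw [(hφder s hs.1.le).deriv]
      have hk := hkey s ⟨hs.1.le, hs.2.le⟩
      have he : 0 < Real.exp (-K * (s - t₀)) := Real.exp_pos _
      nlinarith [mul_nonneg (sub_nonneg.2 hk) he.le]
  have h0 : ψ t₀ = 0 := by
    apply Finset.sum_eq_zero
    intro i _
    rw [min_eq_right (hx0.1 i)]
    norm_num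
  have hφT : φ T ≤ φ t₀ :=
    hanti (Set.left_mem_Icc.2 hT) (Set.right_mem_Icc.2 hT) hT
  have hψT : ψ T = 0 := by
    have he : 0 < Real.exp (-K * (T - t₀)) := Real.exp_pos _
    have hφ0 : φ t₀ = 0 := by simp [hφ, h0]
    have hle : ψ T ≤ 0 := by
      have h5 : ψ T * Real.exp (-K * (T - t₀)) ≤ 0 := by
        rw [hφ0] at hφT; exact hφT
      by_contra hpos
      push_neg at hpos
      nlinarith [mul_pos hpos he]
    exact le_antisymm hle (hψ0 T)
  intro i
  have hterm0 := (Finset.sum_eq_zero_iff_of_nonneg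
    (fun j (_ : j ∈ Finset.univ) => sq_nonneg (min (x T j) 0))).1 hψT i
    (Finset.mem_univ i)
  have hmin : min (x T i) 0 = 0 := by
    exact (pow_eq_zero_iff two_ne_zero).mp hterm0
  exact min_eq_right_iff.1 hmin
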